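/- Let V be a type of variables with a constraint system (P, N, S), let (x, y) ∈ S, and let M, T : V → ZFSet be such that M models the literals P and N, the pair (M, T) satisfies the Ξ-conditions for (P, N, S), and M y ∉ M v for every v : V. Then: M_{x,y} models the literals P and N, the pair (M_{x,y}, T) satisfies the Ξ-conditions for (P, N, S), M_{x,y} x = {M_{x,y} y}, M_{x,y} y = M y, and M_{x,y} x ≠ M x. -/

import Mathlib

namespace ZFHelper

lemma inter_ne_iff (X A : ZFSet) : X ∩ A ≠ ∅ ↔ ∃ z, z ∈ X ∧ z ∈ A := by
  rw [ne_eq, ZFSet.eq_empty]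
  push_neg
  simp [ZFSet.mem_inter]

lemma exists_of_inter_ne {X A : ZFSet} (h : X ∩ A ≠ ∅) : ∃ z, z ∈ X ∧ z ∈ A :=
  (inter_ne_iff X A).mp h

lemma inter_ne_of_mem {X A z : ZFSet} (h1 : z ∈ X) (h2 : z ∈ A) : X ∩ A ≠ ∅ :=
  (inter_ne_iff X A).mpr ⟨z, h1, h2⟩

lemma inter_empty_iff (X A : ZFSet) : X ∩ A = ∅ ↔ ∀ z, z ∈ X → z ∉ A := by
  rw [ZFSet.eq_empty]
  simp [ZFSet.mem_inter]

open Classical in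
noncomputable def fmod (X Y A : ZFSet) : ZFSet := if X ∩ A = ∅ then A else (A \ X) ∪ {Y}

lemma fmod_pos {X Y A : ZFSet} (h : X ∩ A = ∅) : fmod X Y A = A := if_pos h
lemma fmod_neg {X Y A : ZFSet} (h : X ∩ A ≠ ∅) : fmod X Y A = (A \ X) ∪ {Y} := if_neg h

lemma fmod_diff (X Y B C : ZFSet) (hXB : X ∩ B ≠ ∅ → X ⊆ B) (hXC : X ∩ C ≠ ∅ → X ⊆ C)
    (hYB : Y ∉ B) (hYC : Y ∉ C) :
    fmod X Y B \ fmod X Y C = fmod X Y (B \ C) := by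
  by_cases hB : X ∩ B = ∅
  · have hD : X ∩ (B \ C) = ∅ := by
      rw [inter_empty_iff] at hB ⊢
      intro z hz hzd
      exact hB z hz (ZFSet.mem_sdiff.mp hzd).1
    rw [fmod_pos hB, fmod_pos hD]
    by_cases hC : X ∩ C = ∅
    · rw [fmod_pos hC]
    · rw [fmod_neg hC]
      apply ZFSet.ext; intro z
      simp only [ZFSet.mem_sdiff, ZFSet.mem_union, ZFSet.mem_singleton]
      rw [inter_empty_iff] at hB
      constructor
      · rintro ⟨hzB, h2⟩
        refine ⟨hzB, fun hzC => h2 (Or.inl ⟨hzC, fun hzX => hB z hzX hzB⟩)⟩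
      · rintro ⟨hzB, hzC⟩
        refine ⟨hzB, ?_⟩
        rintro (⟨hzC', -⟩ | rfl)
        · exact hzC hzC'
        · exact hYB hzB
  · have hXB' := hXB hB
    rw [fmod_neg hB]
    by_cases hC : X ∩ C = ∅
    · -- X ⊆ B, X ∩ C = ∅, so X ⊆ B \ C and X nonempty
      have hD : X ∩ (B \ C) ≠ ∅ := by
        obtain ⟨z, hzX, hzB⟩ := exists_of_inter_ne hB
        rw [inter_empty_iff] at hC
        exact inter_ne_of_mem hzX (ZFSet.mem_sdiff.mpr ⟨hzB, hC z hzX⟩)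
      rw [fmod_pos hC, fmod_neg hD]
      apply ZFSet.ext; intro z
      simp only [ZFSet.mem_sdiff, ZFSet.mem_union, ZFSet.mem_singleton]
      constructor
      · rintro ⟨(⟨hzB, hzX⟩ | rfl), hzC⟩
        · exact Or.inl ⟨⟨hzB, hzC⟩, hzX⟩
        · exact Or.inr rfl
      · rintro (⟨⟨hzB, hzC⟩, hzX⟩ | rfl)
        · exact ⟨Or.inl ⟨hzB, hzX⟩, hzC⟩
        · exact ⟨Or.inr rfl, hYC⟩
    · have hXC' := hXC hC
      have hD : X ∩ (B \ C) = ∅ := by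
        rw [inter_empty_iff]
        intro z hzX hzd
        exact (ZFSet.mem_sdiff.mp hzd).2 (hXC' hzX)
      rw [fmod_neg hC, fmod_pos hD]
      apply ZFSet.ext; intro z
      simp only [ZFSet.mem_sdiff, ZFSet.mem_union, ZFSet.mem_singleton]
      constructor
      · rintro ⟨(⟨hzB, hzX⟩ | rfl), h2⟩
        · refine ⟨hzB, fun hzC => h2 (Or.inl ⟨hzC, hzX⟩)⟩
        · exact absurd (Or.inr rfl) h2
      · rintro ⟨hzB, hzC⟩
        have hzX : z ∉ X := fun hzX => hzC (hXC' hzX)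
        refine ⟨Or.inl ⟨hzB, hzX⟩, ?_⟩
        rintro (⟨hzC', -⟩ | rfl)
        · exact hzC hzC'
        · exact hYB hzB

lemma fmod_inj {X Y A B : ZFSet} (hXA : X ∩ A ≠ ∅ → X ⊆ A) (hXB : X ∩ B ≠ ∅ → X ⊆ B)
    (hYA : Y ∉ A) (hYB : Y ∉ B) (h : fmod X Y A = fmod X Y B) : A = B := by
  by_cases hA : X ∩ A = ∅ <;> by_cases hB : X ∩ B = ∅
  · rwa [fmod_pos hA, fmod_pos hB] at h
  · rw [fmod_pos hA, fmod_neg hB] at h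
    exfalso
    apply hYA
    rw [h]
    exact ZFSet.mem_union.mpr (Or.inr (ZFSet.mem_singleton.mpr rfl))
  · rw [fmod_neg hA, fmod_pos hB] at h
    exfalso
    apply hYB
    rw [← h]
    exact ZFSet.mem_union.mpr (Or.inr (ZFSet.mem_singleton.mpr rfl))
  · rw [fmod_neg hA, fmod_neg hB] at h
    have hXA' := hXA hA
    have hXB' := hXB hB
    apply ZFSet.ext; intro z
    have hz := fun (w : ZFSet) => congrArg (w ∈ ·) h
    constructor
    · intro hzA
      by_cases hzX : z ∈ X
      · exact hXB' hzX
      · have : z ∈ (A \ X) ∪ {Y} := ZFSet.mem_union.mpr (Or.inl (ZFSet.mem_sdiff.mpr ⟨hzA, hzX⟩))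
        rw [h] at this
        rcases ZFSet.mem_union.mp this with h' | h'
        · exact (ZFSet.mem_sdiff.mp h').1
        · exact absurd ((ZFSet.mem_singleton.mp h') ▸ hzA) hYA
    · intro hzB
      by_cases hzX : z ∈ X
      · exact hXA' hzX
      · have : z ∈ (B \ X) ∪ {Y} := ZFSet.mem_union.mpr (Or.inl (ZFSet.mem_sdiff.mpr ⟨hzB, hzX⟩))
        rw [← h] at this
        rcases ZFSet.mem_union.mp this with h' | h'
        · exact (ZFSet.mem_sdiff.mp h').1
        · exact absurd ((ZFSet.mem_singleton.mp h') ▸ hzB) hYB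

end ZFHelper

/-- `M` models the positive literals `a = b \ c` in `P` and the negative literals
`a ≠ b \ c` in `N`. -/
def ModelsLits {V : Type*} (P N : Finset (V × V × V)) (M : V → ZFSet) : Prop :=
  (∀ t ∈ P, M t.1 = M t.2.1 \ M t.2.2) ∧ (∀ t ∈ N, M t.1 ≠ M t.2.1 \ M t.2.2)

/-- `M` models the whole constraint system `(P, N, S)`. -/
def ModelsSystem {V : Type*} (P N : Finset (V × V × V)) (S : Finset (V × V))
    (M : V → ZFSet) : Prop :=
  ModelsLits P N M ∧ ∀ p ∈ S, M p.1 = {M p.2}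

/-- The pair of assignments `(M, T)` satisfies the Ξ-conditions for the
constraint system `(P, N, S)`. -/
def XiConditions {V : Type*} (S : Finset (V × V)) (M T : V → ZFSet) : Prop :=
  (∀ p ∈ S, ¬ M p.1 ⊆ M p.2) ∧
  (∀ p ∈ S, ∀ q ∈ S, (M p.2 = M q.2 ↔ M p.1 = M q.1)) ∧
  (∀ p ∈ S, ∀ v : V, M p.1 ∩ M v ≠ ∅ → M p.1 ⊆ M v) ∧
  (∀ p ∈ S, ∀ v : V, M p.1 ∩ M v ≠ ∅ → T p.2 ⊆ T v ∧ T p.2 ≠ T v) ∧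
  (∀ u v : V, M u = M v → T u = T v)

open Classical in
/-- The modified assignment `M_{x,y}`. -/
noncomputable def modifyAssign {V : Type*} (M : V → ZFSet) (x y : V) : V → ZFSet :=
  fun v => if M x ∩ M v = ∅ then M v else (M v \ M x) ∪ {M y}

theorem modify_models {V : Type*} (P N : Finset (V × V × V)) (S : Finset (V × V))
    (x y : V) (hxy : (x, y) ∈ S) (M T : V → ZFSet)
    (hM : ModelsLits P N M) (hXi : XiConditions S M T)
    (hy : ∀ v : V, M y ∉ M v) :
    ModelsLits P N (modifyAssign M x y) ∧
    XiConditions S (modifyAssign M x y) T ∧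
    modifyAssign M x y x = {modifyAssign M x y y} ∧
    modifyAssign M x y y = M y ∧
    modifyAssign M x y x ≠ M x := by
  obtain ⟨h1, h2, h3, h4, h5⟩ := hXi
  have hsx : ∀ v, M x ∩ M v ≠ ∅ → M x ⊆ M v := fun v => h3 (x, y) hxy v
  have hfm : ∀ v, modifyAssign M x y v = ZFHelper.fmod (M x) (M y) (M v) := fun v => rfl
  have hxy0 : M x ∩ M y = ∅ := by
    by_contra h
    exact h1 (x, y) hxy (hsx y h)
  have hMy : modifyAssign M x y y = M y := by rw [hfm, ZFHelper.fmod_pos hxy0]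
  have hxne : M x ≠ ∅ := by
    intro h
    exact h1 (x, y) hxy (by rw [h]; exact ZFSet.empty_subset _)
  have hxx : M x ∩ M x ≠ ∅ := by
    intro h
    apply hxne
    rw [ZFSet.eq_empty] at h ⊢
    intro z hz
    exact h z (ZFSet.mem_inter.mpr ⟨hz, hz⟩)
  have hMx : modifyAssign M x y x = {M y} := by
    rw [hfm, ZFHelper.fmod_neg hxx]
    apply ZFSet.ext; intro z
    simp only [ZFSet.mem_union, ZFSet.mem_sdiff, ZFSet.mem_singleton]
    tauto
  have hEq : ∀ u v : V, modifyAssign M x y u = modifyAssign M x y v ↔ M u = M v := by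
    intro u v
    constructor
    · intro h
      exact ZFHelper.fmod_inj (hsx u) (hsx v) (hy u) (hy v) (by rw [← hfm, ← hfm]; exact h)
    · intro h; rw [hfm, hfm, h]
  have hdiff : ∀ b c : V, modifyAssign M x y b \ modifyAssign M x y c
      = ZFHelper.fmod (M x) (M y) (M b \ M c) := by
    intro b c
    rw [hfm, hfm]
    exact ZFHelper.fmod_diff _ _ _ _ (hsx b) (hsx c) (hy b) (hy c)
  have hDsub : ∀ b c : V, M x ∩ (M b \ M c) ≠ ∅ → M x ⊆ M b \ M c := by
    intro b c h
    obtain ⟨z, hzX, hzD⟩ := ZFHelper.exists_of_inter_ne h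
    have hb : M x ⊆ M b := hsx b (ZFHelper.inter_ne_of_mem hzX (ZFSet.mem_sdiff.mp hzD).1)
    intro w hw
    refine ZFSet.mem_sdiff.mpr ⟨hb hw, fun hwc => ?_⟩
    exact (ZFSet.mem_sdiff.mp hzD).2 (hsx c (ZFHelper.inter_ne_of_mem hw hwc) hzX)
  have hDy : ∀ b c : V, M y ∉ M b \ M c := fun b c h => hy b (ZFSet.mem_sdiff.mp h).1
  have hkey : ∀ a v : V,
      modifyAssign M x y a ∩ modifyAssign M x y v ≠ ∅ → M a ∩ M v ≠ ∅ := by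
    intro a v h
    obtain ⟨z, hza, hzv⟩ := ZFHelper.exists_of_inter_ne h
    rw [hfm] at hza hzv
    by_cases ha : M x ∩ M a = ∅ <;> by_cases hv : M x ∩ M v = ∅
    · rw [ZFHelper.fmod_pos ha] at hza; rw [ZFHelper.fmod_pos hv] at hzv
      exact ZFHelper.inter_ne_of_mem hza hzv
    · rw [ZFHelper.fmod_pos ha] at hza; rw [ZFHelper.fmod_neg hv] at hzv
      rcases ZFSet.mem_union.mp hzv with h' | h'
      · exact ZFHelper.inter_ne_of_mem hza (ZFSet.mem_sdiff.mp h').1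
      · exact absurd (ZFSet.mem_singleton.mp h' ▸ hza) (hy a)
    · rw [ZFHelper.fmod_neg ha] at hza; rw [ZFHelper.fmod_pos hv] at hzv
      rcases ZFSet.mem_union.mp hza with h' | h'
      · exact ZFHelper.inter_ne_of_mem (ZFSet.mem_sdiff.mp h').1 hzv
      · exact absurd (ZFSet.mem_singleton.mp h' ▸ hzv) (hy v)
    · obtain ⟨w, hwX, -⟩ := ZFHelper.exists_of_inter_ne ha
      exact ZFHelper.inter_ne_of_mem (hsx a ha hwX) (hsx v hv hwX)
  refine ⟨⟨?_, ?_⟩, ⟨?_, ?_, ?_, ?_, ?_⟩, ?_, hMy, ?_⟩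
  · -- positive literals
    intro t ht
    rw [hdiff, hfm, hM.1 t ht]
  · -- negative literals
    intro t ht h
    apply hM.2 t ht
    rw [hdiff, hfm] at h
    exact ZFHelper.fmod_inj (hsx t.1) (hDsub _ _) (hy t.1) (hDy _ _) h
  · -- Xi (i)
    intro p hp hcon
    apply h1 p hp
    rw [hfm, hfm] at hcon
    by_cases ha : M x ∩ M p.1 = ∅ <;> by_cases hb : M x ∩ M p.2 = ∅
    · rwa [ZFHelper.fmod_pos ha, ZFHelper.fmod_pos hb] at hcon
    · rw [ZFHelper.fmod_pos ha, ZFHelper.fmod_neg hb] at hcon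
      intro z hz
      rcases ZFSet.mem_union.mp (hcon hz) with h' | h'
      · exact (ZFSet.mem_sdiff.mp h').1
      · exact absurd (ZFSet.mem_singleton.mp h' ▸ hz) (hy p.1)
    · rw [ZFHelper.fmod_neg ha, ZFHelper.fmod_pos hb] at hcon
      exfalso
      exact hy p.2 (hcon (ZFSet.mem_union.mpr (Or.inr (ZFSet.mem_singleton.mpr rfl))))
    · rw [ZFHelper.fmod_neg ha, ZFHelper.fmod_neg hb] at hcon
      intro z hz
      by_cases hzX : z ∈ M x
      · exact hsx p.2 hb hzX
      · have h0 := hcon (ZFSet.mem_union.mpr (Or.inl (ZFSet.mem_sdiff.mpr ⟨hz, hzX⟩)))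
        rcases ZFSet.mem_union.mp h0 with h' | h'
        · exact (ZFSet.mem_sdiff.mp h').1
        · exact absurd (ZFSet.mem_singleton.mp h' ▸ hz) (hy p.1)
  · -- Xi (ii)
    intro p hp q hq
    rw [hEq, hEq]
    exact h2 p hp q hq
  · -- Xi (iii)
    intro p hp v h
    have hav := hkey p.1 v h
    have hsubav := h3 p hp v hav
    rw [hfm, hfm]
    by_cases ha : M x ∩ M p.1 = ∅
    · rw [ZFHelper.fmod_pos ha]
      by_cases hv : M x ∩ M v = ∅
      · rwa [ZFHelper.fmod_pos hv]
      · rw [ZFHelper.fmod_neg hv]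
        intro z hz
        exact ZFSet.mem_union.mpr (Or.inl (ZFSet.mem_sdiff.mpr
          ⟨hsubav hz, fun hzX => (ZFHelper.inter_empty_iff _ _).mp ha z hzX hz⟩))
    · have hxa := hsx p.1 ha
      have hv : M x ∩ M v ≠ ∅ := by
        obtain ⟨w, hwX, -⟩ := ZFHelper.exists_of_inter_ne ha
        exact ZFHelper.inter_ne_of_mem hwX (hsubav (hxa hwX))
      rw [ZFHelper.fmod_neg ha, ZFHelper.fmod_neg hv]
      intro z hz
      rcases ZFSet.mem_union.mp hz with h' | h'
      · obtain ⟨hz1, hz2⟩ := ZFSet.mem_sdiff.mp h'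
        exact ZFSet.mem_union.mpr (Or.inl (ZFSet.mem_sdiff.mpr ⟨hsubav hz1, hz2⟩))
      · exact ZFSet.mem_union.mpr (Or.inr h')
  · -- Xi (iv)
    intro p hp v h
    exact h4 p hp v (hkey p.1 v h)
  · -- Xi (v)
    intro u v h
    exact h5 u v ((hEq u v).mp h)
  · rw [hMx, hMy]
  · rw [hMx]
    intro h
    exact hy x (h ▸ ZFSet.mem_singleton.mpr rfl)
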